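/- For density matrices σ1 and σ2 on ℂ^n (n ≥ 1), objective compatibility holds if and only if subjective compatibility holds. -/

import Mathlib

open scoped ComplexOrder

/-- A density matrix on `ℂ^n`: a positive semidefinite matrix of trace `1`. -/
def IsDensityMatrix {n : ℕ} (σ : Matrix (Fin n) (Fin n) ℂ) : Prop :=
  σ.PosSemidef ∧ σ.trace = 1

/-- Objective compatibility of two quantum state assignments `σ1`, `σ2` on `ℂ^n`. -/
def QObjCompatible {n : ℕ} (σ1 σ2 : Matrix (Fin n) (Fin n) ℂ) : Prop :=
  ∃ (X1 : Type) (_ : Fintype X1) (X2 : Type) (_ : Fintype X2),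
    Nonempty X1 ∧ Nonempty X2 ∧
    ∃ (ρ : X1 → X2 → Matrix (Fin n) (Fin n) ℂ) (x1 : X1) (x2 : X2),
      (∀ a b, (ρ a b).PosSemidef) ∧
      (∑ a, ∑ b, (ρ a b).trace = 1) ∧
      0 < ((ρ x1 x2).trace).re ∧
      σ1 = ((∑ b, ρ x1 b).trace)⁻¹ • (∑ b, ρ x1 b) ∧
      σ2 = ((∑ a, ρ a x2).trace)⁻¹ • (∑ a, ρ a x2)

/-- The positive semidefinite square root, as `Matrix.PosSemidef.sqrt` was defined in older Mathlib. -/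
noncomputable def Matrix.PosSemidef.sqrt {n 𝕜 : Type*} [Fintype n] [DecidableEq n] [RCLike 𝕜]
    {A : Matrix n n 𝕜} (hA : A.PosSemidef) : Matrix n n 𝕜 :=
  (hA.1.eigenvectorUnitary : Matrix n n 𝕜) *
    Matrix.diagonal (fun i => ((Real.sqrt (hA.1.eigenvalues i) : ℝ) : 𝕜)) *
    (star hA.1.eigenvectorUnitary : Matrix n n 𝕜)

/-- Subjective compatibility of two positive semidefinite state assignments
`σ1`, `σ2` on `ℂ^n`. -/
def QSubjCompatible {n : ℕ} {σ1 σ2 : Matrix (Fin n) (Fin n) ℂ}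
    (h1 : σ1.PosSemidef) (h2 : σ2.PosSemidef) : Prop :=
  ∃ (X : Type) (_ : Fintype X),
    Nonempty X ∧
    ∃ E : X → Matrix (Fin n) (Fin n) ℂ,
      (∀ x, (E x).PosSemidef) ∧
      (∑ x, E x = 1) ∧
      (∀ x, 0 < ((E x * σ1).trace).re ∧ 0 < ((E x * σ2).trace).re) ∧
      ∃ xt : X,
        ((E xt * σ1).trace)⁻¹ • (h1.sqrt * E xt * h1.sqrt) =
        ((E xt * σ2).trace)⁻¹ • (h2.sqrt * E xt * h2.sqrt)

open Matrix
namespace QCompat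
variable {n : ℕ}



lemma smul_psd (c : ℝ) (hc : 0 ≤ c) {M : Matrix (Fin n) (Fin n) ℂ} (hM : M.PosSemidef) :
    ((c:ℂ) • M).PosSemidef := by
  refine PosSemidef.of_dotProduct_mulVec_nonneg ?_ ?_
  · unfold Matrix.IsHermitian
    rw [conjTranspose_smul, hM.1]
    simp [Complex.ext_iff]
  · intro x
    rw [smul_mulVec, dotProduct_smul]
    exact smul_nonneg (by exact_mod_cast hc) (hM.dotProduct_mulVec_nonneg x)

lemma psd_diag_nonneg {M : Matrix (Fin n) (Fin n) ℂ} (hM : M.PosSemidef) (i : Fin n) :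
    0 ≤ M i i := by
  have := hM.dotProduct_mulVec_nonneg (Pi.single i 1)
  simpa [dotProduct, Pi.single_apply, Finset.sum_ite_eq'] using this

lemma psd_trace_nonneg {M : Matrix (Fin n) (Fin n) ℂ} (hM : M.PosSemidef) :
    0 ≤ M.trace := by
  rw [Matrix.trace]
  exact Finset.sum_nonneg fun i _ => psd_diag_nonneg hM i

lemma psd_trace_eq_re {M : Matrix (Fin n) (Fin n) ℂ} (hM : M.PosSemidef) :
    M.trace = ((M.trace.re : ℝ) : ℂ) := by
  have h := psd_trace_nonneg hM
  rw [Complex.le_def] at h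
  exact Complex.ext (by simp) (by simp [← h.2])

lemma eq_zero_of_forall_mulVec {M : Matrix (Fin n) (Fin n) ℂ} (h : ∀ x, M *ᵥ x = 0) :
    M = 0 := by
  ext i j
  have := congrFun (h (Pi.single j 1)) i
  simpa using this

lemma mul_eq_zero_of_vec {M N : Matrix (Fin n) (Fin n) ℂ}
    (h : ∀ x, M *ᵥ (N *ᵥ x) = 0) : M * N = 0 :=
  eq_zero_of_forall_mulVec fun x => by rw [← mulVec_mulVec]; exact h x

lemma kernel_le {M N : Matrix (Fin n) (Fin n) ℂ} (hM : M.PosSemidef)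
    (hMN : (N - M).PosSemidef) {x : Fin n → ℂ} (hx : N *ᵥ x = 0) : M *ᵥ x = 0 := by
  have h1 : star x ⬝ᵥ (N - M) *ᵥ x = - (star x ⬝ᵥ M *ᵥ x) := by
    rw [sub_mulVec, dotProduct_sub, hx, dotProduct_zero, zero_sub]
  have h2 := hMN.dotProduct_mulVec_nonneg x
  rw [h1] at h2
  have h3 : star x ⬝ᵥ M *ᵥ x = 0 :=
    le_antisymm (neg_nonneg.mp h2) (hM.dotProduct_mulVec_nonneg x)
  exact (hM.dotProduct_mulVec_zero_iff x).mp h3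





lemma psd_sum {X : Type} [Fintype X] (s : Finset X) (f : X → Matrix (Fin n) (Fin n) ℂ)
    (h : ∀ x, (f x).PosSemidef) : (∑ x ∈ s, f x).PosSemidef := by
  classical
  induction s using Finset.induction with
  | empty => simpa using Matrix.PosSemidef.zero
  | insert _ _ hx ih => rw [Finset.sum_insert hx]; exact (h _).add ih

lemma outer_conjTranspose (w : Fin n → ℂ) :
    (vecMulVec w (star w))ᴴ = vecMulVec w (star w) := by
  ext i j
  simp [vecMulVec_apply, conjTranspose_apply, mul_comm]

lemma psd_outer (w : Fin n → ℂ) : (vecMulVec w (star w)).PosSemidef := by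
  refine PosSemidef.of_dotProduct_mulVec_nonneg (outer_conjTranspose w) fun x => ?_
  have : star x ⬝ᵥ (vecMulVec w (star w)) *ᵥ x = star (star w ⬝ᵥ x) * (star w ⬝ᵥ x) := by
    simp only [dotProduct, mulVec, vecMulVec_apply, Finset.mul_sum, Finset.sum_mul, star_sum,
      Pi.star_apply, star_mul']
    rw [Finset.sum_comm]
    apply Finset.sum_congr rfl; intro i _
    apply Finset.sum_congr rfl; intro j _
    ring_nf
    simp [mul_comm, mul_left_comm, mul_assoc]
  rw [this]
  exact star_mul_self_nonneg _

lemma mul_outer_mul (M N : Matrix (Fin n) (Fin n) ℂ) (u v : Fin n → ℂ) :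
    M * vecMulVec u v * N = vecMulVec (M *ᵥ u) (v ᵥ* N) := by
  ext i j
  simp only [mul_apply, vecMulVec_apply, mulVec, vecMul, dotProduct, Finset.sum_mul,
    Finset.mul_sum]
  apply Finset.sum_congr rfl; intro k _
  apply Finset.sum_congr rfl; intro l _
  ring

lemma trace_outer_mul (u v : Fin n → ℂ) (M : Matrix (Fin n) (Fin n) ℂ) :
    (vecMulVec u v * M).trace = v ⬝ᵥ (M *ᵥ u) := by
  simp only [Matrix.trace, diag_apply, mul_apply, vecMulVec_apply, dotProduct, mulVec,
    Finset.mul_sum]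
  rw [Finset.sum_comm]
  apply Finset.sum_congr rfl; intro k _
  apply Finset.sum_congr rfl; intro l _
  ring





lemma cs_dot (w x : Fin n → ℂ) :
    Complex.normSq (star w ⬝ᵥ x) ≤ (star w ⬝ᵥ w).re * (star x ⬝ᵥ x).re := by
  let w' : EuclideanSpace ℂ (Fin n) := (WithLp.equiv 2 _).symm w
  let x' : EuclideanSpace ℂ (Fin n) := (WithLp.equiv 2 _).symm x
  have h1 : inner ℂ w' x' = star w ⬝ᵥ x := (EuclideanSpace.inner_toLp_toLp w x).trans (dotProduct_comm _ _)
  have h2 : inner ℂ w' w' = star w ⬝ᵥ w := (EuclideanSpace.inner_toLp_toLp w w).trans (dotProduct_comm _ _)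
  have h3 : inner ℂ x' x' = star x ⬝ᵥ x := (EuclideanSpace.inner_toLp_toLp x x).trans (dotProduct_comm _ _)
  have hcs := norm_inner_le_norm (𝕜 := ℂ) w' x'
  have hw : (star w ⬝ᵥ w).re = ‖w'‖ ^ 2 := by
    rw [← h2, inner_self_eq_norm_sq_to_K]; simp [← Complex.ofReal_pow]
  have hx : (star x ⬝ᵥ x).re = ‖x'‖ ^ 2 := by
    rw [← h3, inner_self_eq_norm_sq_to_K]; simp [← Complex.ofReal_pow]
  have hn : Complex.normSq (star w ⬝ᵥ x) = ‖inner ℂ w' x'‖ ^ 2 := by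
    rw [h1, ← Complex.sq_norm]
  rw [hn, hw, hx]
  calc ‖inner ℂ w' x'‖ ^ 2 ≤ (‖w'‖ * ‖x'‖) ^ 2 := by
        apply pow_le_pow_left₀ (norm_nonneg _) hcs 2
    _ = ‖w'‖ ^ 2 * ‖x'‖ ^ 2 := by ring





lemma outer_quad (w x : Fin n → ℂ) :
    star x ⬝ᵥ (vecMulVec w (star w)) *ᵥ x = ((Complex.normSq (star w ⬝ᵥ x) : ℝ) : ℂ) := by
  have : star x ⬝ᵥ (vecMulVec w (star w)) *ᵥ x = star (star w ⬝ᵥ x) * (star w ⬝ᵥ x) := by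
    simp only [dotProduct, mulVec, vecMulVec_apply, Finset.mul_sum, Finset.sum_mul, star_sum,
      Pi.star_apply, star_mul']
    rw [Finset.sum_comm]
    apply Finset.sum_congr rfl; intro i _
    apply Finset.sum_congr rfl; intro j _
    ring_nf
    simp [mul_comm, mul_left_comm, mul_assoc]
  rw [this]
  rw [show star (star w ⬝ᵥ x) = (starRingEnd ℂ) (star w ⬝ᵥ x) from rfl]
  rw [mul_comm, Complex.mul_conj]

lemma dot_star_self_re (x : Fin n → ℂ) :
    star x ⬝ᵥ x = (((star x ⬝ᵥ x).re : ℝ) : ℂ) := by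
  have h : 0 ≤ star x ⬝ᵥ x := dotProduct_star_self_nonneg x
  rw [Complex.le_def] at h
  exact Complex.ext (by simp) (by simp [← h.2])

lemma psd_one_sub_outer (w : Fin n → ℂ) (ε : ℝ) (hε : 0 ≤ ε)
    (h : ε * (star w ⬝ᵥ w).re ≤ 1) :
    ((1 : Matrix (Fin n) (Fin n) ℂ) - (ε:ℂ) • vecMulVec w (star w)).PosSemidef := by
  refine PosSemidef.of_dotProduct_mulVec_nonneg ?_ ?_
  · unfold Matrix.IsHermitian
    rw [conjTranspose_sub, conjTranspose_smul, conjTranspose_one]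
    congr 1
    · ext i j
      simp [vecMulVec_apply, conjTranspose_apply, mul_comm, Complex.ext_iff]
  · intro x
    rw [sub_mulVec, dotProduct_sub, smul_mulVec, dotProduct_smul, outer_quad, one_mulVec]
    rw [dot_star_self_re x]
    have hcs := cs_dot w x
    have hx : 0 ≤ (star x ⬝ᵥ x).re := by
      have h0 : 0 ≤ star x ⬝ᵥ x := dotProduct_star_self_nonneg x
      rw [Complex.le_def] at h0; simpa using h0.1
    have hw : 0 ≤ (star w ⬝ᵥ w).re := by
      have h0 : 0 ≤ star w ⬝ᵥ w := dotProduct_star_self_nonneg w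
      rw [Complex.le_def] at h0; simpa using h0.1
    have key : ε * Complex.normSq (star w ⬝ᵥ x) ≤ (star x ⬝ᵥ x).re := by
      calc ε * Complex.normSq (star w ⬝ᵥ x) ≤ ε * ((star w ⬝ᵥ w).re * (star x ⬝ᵥ x).re) := by
            exact mul_le_mul_of_nonneg_left hcs hε
        _ = (ε * (star w ⬝ᵥ w).re) * (star x ⬝ᵥ x).re := by ring
        _ ≤ 1 * (star x ⬝ᵥ x).re := by exact mul_le_mul_of_nonneg_right h hx
        _ = (star x ⬝ᵥ x).re := one_mul _
    rw [show ((ε:ℂ) • ((Complex.normSq (star w ⬝ᵥ x) : ℝ) : ℂ)) = (((ε * Complex.normSq (star w ⬝ᵥ x) : ℝ)) : ℂ) by rw [smul_eq_mul]; push_cast; ring]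
    rw [← Complex.ofReal_sub]
    rw [Complex.le_def]
    constructor
    · simpa using by linarith
    · simp



lemma herm_shift {H M : Matrix (Fin n) (Fin n) ℂ} (hH : H.IsHermitian) (y : Fin n → ℂ) :
    star y ⬝ᵥ (H * M * H) *ᵥ y = star (H *ᵥ y) ⬝ᵥ M *ᵥ (H *ᵥ y) := by
  have h1 : (H * M * H) *ᵥ y = H *ᵥ (M *ᵥ (H *ᵥ y)) := by
    rw [mulVec_mulVec, mulVec_mulVec]
  rw [h1, dotProduct_mulVec, show star y ᵥ* H = star (H *ᵥ y) by
    rw [star_mulVec, hH.eq], dotProduct_mulVec]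

lemma unitary_conj_mul (U : Matrix (Fin n) (Fin n) ℂ) (hU : star U * U = 1)
    (f f' : Fin n → ℝ) :
    (U * diagonal (Complex.ofReal ∘ f) * star U) * (U * diagonal (Complex.ofReal ∘ f') * star U)
      = U * diagonal (Complex.ofReal ∘ (f * f')) * star U := by
  have hd : diagonal (Complex.ofReal ∘ f) * diagonal (Complex.ofReal ∘ f')
      = diagonal (Complex.ofReal ∘ (f * f')) := by
    rw [diagonal_mul_diagonal]
    have : (fun i => (Complex.ofReal ∘ f) i * (Complex.ofReal ∘ f') i) = Complex.ofReal ∘ (f * f') := by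
      funext i
      simp [Pi.mul_apply]
    rw [this]
  calc (U * diagonal (Complex.ofReal ∘ f) * star U) * (U * diagonal (Complex.ofReal ∘ f') * star U)
      = U * diagonal (Complex.ofReal ∘ f) * (star U * U) * diagonal (Complex.ofReal ∘ f') * star U := by
        simp only [Matrix.mul_assoc]
    _ = U * (diagonal (Complex.ofReal ∘ f) * diagonal (Complex.ofReal ∘ f')) * star U := by
        rw [hU]
        simp only [Matrix.mul_assoc, Matrix.one_mul]
    _ = U * diagonal (Complex.ofReal ∘ (f * f')) * star U := by rw [hd]

lemma diag_herm (f : Fin n → ℝ) : (diagonal (Complex.ofReal ∘ f)).IsHermitian := by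
  rw [Matrix.IsHermitian, diagonal_conjTranspose]
  have : star (Complex.ofReal ∘ f) = Complex.ofReal ∘ f := by
    funext i
    simp [Pi.star_apply, Complex.conj_ofReal]
  rw [this]

lemma unitary_conj_herm (U : Matrix (Fin n) (Fin n) ℂ) (f : Fin n → ℝ) :
    (U * diagonal (Complex.ofReal ∘ f) * star U).IsHermitian := by
  rw [show (star U : Matrix (Fin n) (Fin n) ℂ) = Uᴴ from rfl]
  exact isHermitian_mul_mul_conjTranspose U (diag_herm f)

lemma unitary_conj_psd (U : Matrix (Fin n) (Fin n) ℂ) (f : Fin n → ℝ) (hf : ∀ i, 0 ≤ f i) :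
    (U * diagonal (Complex.ofReal ∘ f) * star U).PosSemidef := by
  rw [show (star U : Matrix (Fin n) (Fin n) ℂ) = Uᴴ from rfl]
  exact (Matrix.PosSemidef.diagonal (fun i => by
    simpa using (by exact_mod_cast hf i : (0:ℂ) ≤ (f i:ℂ)) : (0:Fin n → ℂ) ≤ Complex.ofReal ∘ f)).mul_mul_conjTranspose_same U

lemma _root_.Matrix.PosSemidef.posSemidef_sqrt {A : Matrix (Fin n) (Fin n) ℂ}
    (hA : A.PosSemidef) : hA.sqrt.PosSemidef :=
  unitary_conj_psd _ (fun i => Real.sqrt (hA.1.eigenvalues i)) (fun _ => Real.sqrt_nonneg _)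

lemma _root_.Matrix.PosSemidef.sqrt_mul_self {A : Matrix (Fin n) (Fin n) ℂ}
    (hA : A.PosSemidef) : hA.sqrt * hA.sqrt = A := by
  have h := unitary_conj_mul (hA.1.eigenvectorUnitary : Matrix (Fin n) (Fin n) ℂ)
    (Matrix.UnitaryGroup.star_mul_self _) (fun i => Real.sqrt (hA.1.eigenvalues i))
    (fun i => Real.sqrt (hA.1.eigenvalues i))
  have hf : ((fun i => Real.sqrt (hA.1.eigenvalues i)) * fun i => Real.sqrt (hA.1.eigenvalues i))
      = hA.1.eigenvalues := by
    funext i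
    simp [Real.mul_self_sqrt (hA.eigenvalues_nonneg i)]
  rw [hf] at h
  exact h.trans hA.1.spectral_theorem.symm

lemma exists_parallel {A B τ : Matrix (Fin n) (Fin n) ℂ}
    (hA : A.PosSemidef) (hB : B.PosSemidef) (hτ : τ.PosSemidef) (hτ0 : τ ≠ 0)
    (hkA : ∀ x, A *ᵥ x = 0 → τ *ᵥ x = 0) (hkB : ∀ x, B *ᵥ x = 0 → τ *ᵥ x = 0) :
    ∃ (w : Fin n → ℂ) (μ : ℝ), 0 < μ ∧ A *ᵥ w = (μ:ℂ) • (B *ᵥ w) ∧ B *ᵥ w ≠ 0 := by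
  classical
  obtain ⟨G, hGdef⟩ : ∃ G, G = A + B := ⟨_, rfl⟩
  have hGpsd : G.PosSemidef := by rw [hGdef]; exact hA.add hB
  obtain ⟨U, hUdef⟩ : ∃ U : Matrix (Fin n) (Fin n) ℂ,
    U = (hGpsd.1.eigenvectorUnitary : Matrix (Fin n) (Fin n) ℂ) := ⟨_, rfl⟩
  have hU1 : star U * U = 1 := by
    rw [hUdef]; exact Matrix.UnitaryGroup.star_mul_self hGpsd.1.eigenvectorUnitary
  obtain ⟨g, hgdef⟩ : ∃ g : Fin n → ℝ, g = hGpsd.1.eigenvalues := ⟨_, rfl⟩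
  have hg : ∀ i, 0 ≤ g i := by rw [hgdef]; exact hGpsd.eigenvalues_nonneg
  obtain ⟨hh, hhdef⟩ : ∃ hh : Fin n → ℝ, hh = fun i => (Real.sqrt (g i))⁻¹ := ⟨_, rfl⟩
  obtain ⟨e, hedef⟩ : ∃ e : Fin n → ℝ, e = fun i => if g i = 0 then 0 else 1 := ⟨_, rfl⟩
  have hhnn : ∀ i, 0 ≤ hh i := fun i => by rw [hhdef]; exact inv_nonneg.mpr (Real.sqrt_nonneg _)
  obtain ⟨H, hHdef⟩ : ∃ H, H = U * diagonal (Complex.ofReal ∘ hh) * star U := ⟨_, rfl⟩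
  obtain ⟨P, hPdef⟩ : ∃ P, P = U * diagonal (Complex.ofReal ∘ e) * star U := ⟨_, rfl⟩
  have hHherm : H.IsHermitian := by rw [hHdef]; exact unitary_conj_herm U hh
  have hPherm : P.IsHermitian := by rw [hPdef]; exact unitary_conj_herm U e
  have hGD : G = U * diagonal (Complex.ofReal ∘ g) * star U := by
    rw [hUdef, hgdef]; exact hGpsd.1.spectral_theorem
  have hhge : hh * g * hh = e := by
    funext i
    by_cases h : g i = 0
    · simp [hhdef, hedef, h]
    · have hgi : 0 < g i := lt_of_le_of_ne (hg i) (Ne.symm h)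
      have hs : Real.sqrt (g i) ≠ 0 := Real.sqrt_ne_zero'.mpr hgi
      have hsq : Real.sqrt (g i) * Real.sqrt (g i) = g i := Real.mul_self_sqrt (hg i)
      simp only [hhdef, hedef, Pi.mul_apply, if_neg h]
      rw [← hsq]
      rw [Real.sqrt_mul_self (Real.sqrt_nonneg _)]
      field_simp
  have heh : e * hh = hh := by
    funext i
    by_cases h : g i = 0 <;> simp [hedef, hhdef, Pi.mul_apply, h]
  have hhe : hh * e = hh := by
    funext i
    by_cases h : g i = 0 <;> simp [hedef, hhdef, Pi.mul_apply, h]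
  have hge : g * e = g := by
    funext i
    by_cases h : g i = 0 <;> simp [hedef, Pi.mul_apply, h]
  have hHGH : H * G * H = P := by
    rw [hHdef, hGD, hPdef, unitary_conj_mul U hU1 hh g, unitary_conj_mul U hU1 (hh*g) hh, hhge]
  have hPH : P * H = H := by
    rw [hPdef, hHdef, unitary_conj_mul U hU1 e hh, heh]
  have hHP : H * P = H := by
    rw [hPdef, hHdef, unitary_conj_mul U hU1 hh e, hhe]
  have hGP : G * P = G := by
    rw [hGD, hPdef, unitary_conj_mul U hU1 g e, hge]
  -- kernel of G is contained in kernels of A, B, τ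
  have hker : ∀ x, G *ᵥ x = 0 → (A *ᵥ x = 0 ∧ B *ᵥ x = 0) := by
    intro x hx
    have h0 : star x ⬝ᵥ A *ᵥ x + star x ⬝ᵥ B *ᵥ x = 0 := by
      have : star x ⬝ᵥ G *ᵥ x = 0 := by rw [hx, dotProduct_zero]
      rwa [hGdef, add_mulVec, dotProduct_add] at this
    have ha := hA.dotProduct_mulVec_nonneg x
    have hb := hB.dotProduct_mulVec_nonneg x
    have hA0 : star x ⬝ᵥ A *ᵥ x = 0 := by
      have heq : star x ⬝ᵥ A *ᵥ x = -(star x ⬝ᵥ B *ᵥ x) := eq_neg_of_add_eq_zero_left h0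
      exact le_antisymm (heq ▸ neg_nonpos.mpr hb) ha
    have hB0 : star x ⬝ᵥ B *ᵥ x = 0 := by
      have heq : star x ⬝ᵥ B *ᵥ x = -(star x ⬝ᵥ A *ᵥ x) := eq_neg_of_add_eq_zero_right h0
      exact le_antisymm (heq ▸ neg_nonpos.mpr ha) hb
    exact ⟨(hA.dotProduct_mulVec_zero_iff x).mp hA0, (hB.dotProduct_mulVec_zero_iff x).mp hB0⟩
  have hG1P : G * (1 - P) = 0 := by rw [Matrix.mul_sub, Matrix.mul_one, hGP, sub_self]
  have hmulP : ∀ M : Matrix (Fin n) (Fin n) ℂ,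
      (∀ x, G *ᵥ x = 0 → M *ᵥ x = 0) → M * P = M := by
    intro M hM
    have hz : M * (1 - P) = 0 := by
      apply mul_eq_zero_of_vec
      intro x
      apply hM
      rw [mulVec_mulVec, hG1P, zero_mulVec]
    rwa [Matrix.mul_sub, Matrix.mul_one, sub_eq_zero, eq_comm] at hz
  have hAP : A * P = A := hmulP A fun x hx => (hker x hx).1
  have hBP : B * P = B := hmulP B fun x hx => (hker x hx).2
  have hτP : τ * P = τ := hmulP τ fun x hx => hkA x (hker x hx).1
  have hPA : P * A = A := by
    have := congrArg Matrix.conjTranspose hAP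
    rwa [conjTranspose_mul, hPherm.eq, hA.1.eq] at this
  have hPB2 : P * B = B := by
    have := congrArg Matrix.conjTranspose hBP
    rwa [conjTranspose_mul, hPherm.eq, hB.1.eq] at this
  have hPτ : P * τ = τ := by
    have := congrArg Matrix.conjTranspose hτP
    rwa [conjTranspose_mul, hPherm.eq, hτ.1.eq] at this
  -- the conjugated matrices
  obtain ⟨Bt, hBtdef⟩ : ∃ Bt, Bt = H * B * H := ⟨_, rfl⟩
  obtain ⟨At, hAtdef⟩ : ∃ At, At = H * A * H := ⟨_, rfl⟩
  have hBtpsd : Bt.PosSemidef := by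
    rw [hBtdef, show H * B * H = H * B * Hᴴ by rw [hHherm.eq]]
    exact hB.mul_mul_conjTranspose_same H
  have hAtpsd : At.PosSemidef := by
    rw [hAtdef, show H * A * H = H * A * Hᴴ by rw [hHherm.eq]]
    exact hA.mul_mul_conjTranspose_same H
  have hsum : At + Bt = P := by
    rw [hAtdef, hBtdef, ← hHGH, hGdef, Matrix.mul_add, Matrix.add_mul]
  have hPBt : P * Bt = Bt := by
    calc P * Bt = (P * H) * (B * H) := by rw [hBtdef]; simp only [Matrix.mul_assoc]
      _ = Bt := by rw [hPH, hBtdef, Matrix.mul_assoc]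
  have hτtkey : ∀ σ : Matrix (Fin n) (Fin n) ℂ, σ.PosSemidef →
      (∀ x, σ *ᵥ x = 0 → τ *ᵥ x = 0) →
      ∀ y, (H * σ * H) *ᵥ y = 0 → (H * τ * H) *ᵥ y = 0 := by
    intro σ hσ hkσ y hy
    have hq : star y ⬝ᵥ (H * σ * H) *ᵥ y = 0 := by rw [hy, dotProduct_zero]
    rw [herm_shift hHherm] at hq
    have hσH : σ *ᵥ (H *ᵥ y) = 0 := (hσ.dotProduct_mulVec_zero_iff _).mp hq
    have hτH : τ *ᵥ (H *ᵥ y) = 0 := hkσ _ hσH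
    rw [← mulVec_mulVec, ← mulVec_mulVec, hτH, mulVec_zero]
  obtain ⟨β, hβdef⟩ : ∃ β : Fin n → ℝ, β = hBtpsd.1.eigenvalues := ⟨_, rfl⟩
  by_cases hcase : ∀ i, β i = 0 ∨ β i = 1
  · -- contradiction case : τ must vanish
    exfalso
    have hspec : ∃ (V : Matrix (Fin n) (Fin n) ℂ) (b : Fin n → ℝ), star V * V = 1 ∧
        Bt = V * diagonal (Complex.ofReal ∘ b) * star V ∧ ∀ j, b j = 0 ∨ b j = 1 := by
      refine ⟨(hBtpsd.1.eigenvectorUnitary : Matrix (Fin n) (Fin n) ℂ), hBtpsd.1.eigenvalues,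
        Matrix.UnitaryGroup.star_mul_self hBtpsd.1.eigenvectorUnitary,
        hBtpsd.1.spectral_theorem, fun j => ?_⟩
      have hj := hcase j
      rwa [hβdef] at hj
    obtain ⟨V, b, hV1, hV, hb01⟩ := hspec
    have hββ : Complex.ofReal ∘ (b * b) = Complex.ofReal ∘ b := by
      funext j
      rcases hb01 j with h | h <;> simp [Pi.mul_apply, h]
    have hBt2 : Bt * Bt = Bt := by
      rw [hV, unitary_conj_mul V hV1 b b, hββ]
    have hAtBt : At * Bt = 0 := by
      have h1 : At = P - Bt := eq_sub_of_add_eq hsum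
      rw [h1, Matrix.sub_mul, hPBt, hBt2, sub_self]
    have hBtAt : Bt * At = 0 := by
      have := congrArg Matrix.conjTranspose hAtBt
      rwa [conjTranspose_mul, hAtpsd.1.eq, hBtpsd.1.eq, conjTranspose_zero] at this
    obtain ⟨τt, hτtdef⟩ : ∃ τt, τt = H * τ * H := ⟨_, rfl⟩
    have hkerBt : ∀ y, Bt *ᵥ y = 0 → τt *ᵥ y = 0 := by
      intro y hy
      rw [hτtdef]
      exact hτtkey B hB hkB y (by rw [← hBtdef]; exact hy)
    have hkerAt : ∀ y, At *ᵥ y = 0 → τt *ᵥ y = 0 := by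
      intro y hy
      rw [hτtdef]
      exact hτtkey A hA hkA y (by rw [← hAtdef]; exact hy)
    have hτtAt : τt * At = 0 := by
      apply mul_eq_zero_of_vec
      intro x
      apply hkerBt
      rw [mulVec_mulVec, hBtAt, zero_mulVec]
    have hτtBt : τt * Bt = 0 := by
      apply mul_eq_zero_of_vec
      intro x
      apply hkerAt
      rw [mulVec_mulVec, hAtBt, zero_mulVec]
    have hτtP : τt * P = τt := by
      rw [hτtdef, Matrix.mul_assoc, Matrix.mul_assoc, hHP, ← Matrix.mul_assoc]
    have hτt0 : τt = 0 := by
      have : τt * (At + Bt) = 0 := by rw [Matrix.mul_add, hτtAt, hτtBt, add_zero]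
      rwa [hsum, hτtP] at this
    have hτ00 : τ = 0 := by
      have h1 : P * τ * P = τ := by rw [hPτ, hτP]
      have h2 : P * τ * P = 0 := by
        calc P * τ * P = (H * G) * (H * τ * H) * (G * H) := by
              rw [← hHGH]; simp only [Matrix.mul_assoc]
          _ = (H * G) * τt * (G * H) := by rw [hτtdef]
          _ = 0 := by rw [hτt0, Matrix.mul_zero, Matrix.zero_mul]
      rw [← h1, h2]
    exact hτ0 hτ00
  · push_neg at hcase
    obtain ⟨i, hβ0, hβ1⟩ := hcase
    obtain ⟨u, hudef⟩ : ∃ u : Fin n → ℂ, u = ⇑(hBtpsd.1.eigenvectorBasis i) := ⟨_, rfl⟩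
    have hu0 : u ≠ 0 := by
      intro h
      apply hBtpsd.1.eigenvectorBasis.orthonormal.ne_zero i
      have h2 : ⇑(hBtpsd.1.eigenvectorBasis i) = (0 : Fin n → ℂ) := by rw [← hudef]; exact h
      ext j
      exact congrFun h2 j
    have heig : Bt *ᵥ u = (β i : ℂ) • u := by
      rw [hudef, hBtpsd.1.mulVec_eigenvectorBasis i, hβdef]
      funext j
      simp [Complex.real_smul]
    have hPu : P *ᵥ u = u := by
      have hb : (β i : ℂ) ≠ 0 := by exact_mod_cast hβ0
      have h1 : u = ((β i : ℂ))⁻¹ • (Bt *ᵥ u) := by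
        rw [heig, smul_smul, inv_mul_cancel₀ hb, one_smul]
      calc P *ᵥ u = P *ᵥ (((β i : ℂ))⁻¹ • (Bt *ᵥ u)) := by rw [← h1]
        _ = ((β i : ℂ))⁻¹ • (P *ᵥ (Bt *ᵥ u)) := mulVec_smul _ _ _
        _ = ((β i : ℂ))⁻¹ • ((P * Bt) *ᵥ u) := by rw [mulVec_mulVec]
        _ = ((β i : ℂ))⁻¹ • (Bt *ᵥ u) := by rw [hPBt]
        _ = u := h1.symm
    have hAtu : At *ᵥ u = ((1 : ℂ) - (β i : ℂ)) • u := by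
      have h1 : At = P - Bt := eq_sub_of_add_eq hsum
      rw [h1, sub_mulVec, hPu, heig, sub_smul, one_smul]
    obtain ⟨w, hwdef⟩ : ∃ w : Fin n → ℂ, w = H *ᵥ u := ⟨_, rfl⟩
    have hAw : H *ᵥ (A *ᵥ w) = ((1 : ℂ) - (β i : ℂ)) • u := by
      rw [hwdef, mulVec_mulVec, mulVec_mulVec, ← hAtdef, hAtu]
    have hBw : H *ᵥ (B *ᵥ w) = (β i : ℂ) • u := by
      rw [hwdef, mulVec_mulVec, mulVec_mulVec, ← hBtdef, heig]
    obtain ⟨y, hydef⟩ : ∃ y : Fin n → ℂ,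
      y = (β i : ℂ) • (A *ᵥ w) - ((1 : ℂ) - (β i : ℂ)) • (B *ᵥ w) := ⟨_, rfl⟩
    have hHy : H *ᵥ y = 0 := by
      rw [hydef, mulVec_sub, mulVec_smul, mulVec_smul, hAw, hBw, smul_smul, smul_smul,
        mul_comm, sub_self]
    have hPy : P *ᵥ y = y := by
      have h1 : P *ᵥ (A *ᵥ w) = A *ᵥ w := by rw [mulVec_mulVec, hPA]
      have h2 : P *ᵥ (B *ᵥ w) = B *ᵥ w := by rw [mulVec_mulVec, hPB2]
      rw [hydef, mulVec_sub, mulVec_smul, mulVec_smul, h1, h2]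
    have hy0 : y = 0 := by
      have h1 : y = P *ᵥ y := hPy.symm
      rw [h1, ← hHGH, ← mulVec_mulVec, ← mulVec_mulVec, hHy, mulVec_zero, mulVec_zero]
    have hkey : (β i : ℂ) • (A *ᵥ w) = ((1 : ℂ) - (β i : ℂ)) • (B *ᵥ w) := by
      have h2 : (β i : ℂ) • (A *ᵥ w) - ((1 : ℂ) - (β i : ℂ)) • (B *ᵥ w) = 0 := by
        rw [← hydef]; exact hy0
      exact sub_eq_zero.mp h2
    have hBw0 : B *ᵥ w ≠ 0 := by
      intro h
      have h2 : H *ᵥ (B *ᵥ w) = 0 := by rw [h, mulVec_zero]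
      rw [hBw] at h2
      rcases smul_eq_zero.mp h2 with h' | h'
      · exact hβ0 (Complex.ofReal_eq_zero.mp h')
      · exact hu0 h'
    have hAw0 : A *ᵥ w ≠ 0 := by
      intro h
      have h2 : H *ᵥ (A *ᵥ w) = 0 := by rw [h, mulVec_zero]
      rw [hAw] at h2
      rcases smul_eq_zero.mp h2 with h' | h'
      · apply hβ1
        have h3 : (β i : ℂ) = 1 := (sub_eq_zero.mp h').symm
        exact_mod_cast h3
      · exact hu0 h'
    have hABw : A *ᵥ w = (((1 - β i) / β i : ℝ) : ℂ) • (B *ᵥ w) := by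
      have hb : (β i : ℂ) ≠ 0 := by exact_mod_cast hβ0
      have h2 := congrArg (fun v => ((β i : ℂ))⁻¹ • v) hkey
      simp only [smul_smul, inv_mul_cancel₀ hb, one_smul] at h2
      rw [h2]
      congr 1
      push_cast
      ring
    -- positivity
    have hq : ∀ (M : Matrix (Fin n) (Fin n) ℂ), M.PosSemidef → M *ᵥ w ≠ 0 →
        0 < (star w ⬝ᵥ M *ᵥ w).re ∧ (star w ⬝ᵥ M *ᵥ w).im = 0 := by
      intro M hM hMw
      have h1 : star w ⬝ᵥ M *ᵥ w ≠ 0 := fun h => hMw ((hM.dotProduct_mulVec_zero_iff w).mp h)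
      have h2 := hM.dotProduct_mulVec_nonneg w
      rw [Complex.le_def] at h2
      refine ⟨lt_of_le_of_ne (by simpa using h2.1) ?_, by simpa using h2.2.symm⟩
      intro h
      apply h1
      apply Complex.ext
      · simpa using h.symm
      · simpa using h2.2.symm
    obtain ⟨haRe, haIm⟩ := hq A hA hAw0
    obtain ⟨hcRe, hcIm⟩ := hq B hB hBw0
    have hac : (star w ⬝ᵥ A *ᵥ w).re = ((1 - β i) / β i) * (star w ⬝ᵥ B *ᵥ w).re := by
      rw [hABw, dotProduct_smul, smul_eq_mul, Complex.mul_re, hcIm]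
      simp
    have hμpos : 0 < (1 - β i) / β i := by
      by_contra hcon
      push_neg at hcon
      nlinarith
    exact ⟨w, (1 - β i) / β i, hμpos, hABw, hBw0⟩

lemma normalized_outer_smul (v : Fin n → ℂ) (hv : v ≠ 0) (c : ℂ) (hc : c ≠ 0) :
    (star (c • v) ⬝ᵥ (c • v))⁻¹ • vecMulVec (c • v) (star (c • v))
      = (star v ⬝ᵥ v)⁻¹ • vecMulVec v (star v) := by
  have hd : star v ⬝ᵥ v ≠ 0 := fun h => hv (dotProduct_star_self_eq_zero.mp h)
  have h1 : star (c • v) ⬝ᵥ (c • v) = (star c * c) * (star v ⬝ᵥ v) := by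
    rw [star_smul, smul_dotProduct, dotProduct_smul, smul_eq_mul, smul_eq_mul]
    ring
  have h2 : vecMulVec (c • v) (star (c • v)) = (c * star c) • vecMulVec v (star v) := by
    ext i j
    simp only [vecMulVec_apply, Pi.smul_apply, star_smul, smul_eq_mul, Matrix.smul_apply,
      Pi.star_apply]
    ring
  rw [h1, h2, smul_smul]
  congr 1
  have hX : c * star c ≠ 0 := mul_ne_zero hc (star_ne_zero.mpr hc)
  calc (star c * c * (star v ⬝ᵥ v))⁻¹ * (c * star c)
      = ((c * star c) * (star v ⬝ᵥ v))⁻¹ * (c * star c) := by ring_nf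
    _ = (star v ⬝ᵥ v)⁻¹ := by
        rw [mul_inv, mul_comm ((c * star c))⁻¹ _, mul_assoc, inv_mul_cancel₀ hX, mul_one]

/-- Transfer `star w ⬝ᵥ (M * M) *ᵥ w` to `star (M *ᵥ w) ⬝ᵥ (M *ᵥ w)` for hermitian `M`. -/
lemma herm_sq_dot {M : Matrix (Fin n) (Fin n) ℂ} (hM : M.IsHermitian) (w : Fin n → ℂ) :
    star w ⬝ᵥ (M * M) *ᵥ w = star (M *ᵥ w) ⬝ᵥ (M *ᵥ w) := by
  rw [← mulVec_mulVec, dotProduct_mulVec, show star w ᵥ* M = star (M *ᵥ w) by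
    rw [star_mulVec, hM.eq]]

lemma subj_of_parallel {σ1 σ2 : Matrix (Fin n) (Fin n) ℂ}
    (h1 : σ1.PosSemidef) (h2 : σ2.PosSemidef) (ht1 : σ1.trace = 1) (ht2 : σ2.trace = 1)
    (w : Fin n → ℂ) (μ : ℝ) (hμ : 0 < μ)
    (hAB : h1.sqrt *ᵥ w = (μ:ℂ) • (h2.sqrt *ᵥ w))
    (hBw : h2.sqrt *ᵥ w ≠ 0) :
    ∃ (X : Type) (_ : Fintype X),
    Nonempty X ∧
    ∃ E : X → Matrix (Fin n) (Fin n) ℂ,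
      (∀ x, (E x).PosSemidef) ∧
      (∑ x, E x = 1) ∧
      (∀ x, 0 < ((E x * σ1).trace).re ∧ 0 < ((E x * σ2).trace).re) ∧
      ∃ xt : X,
        ((E xt * σ1).trace)⁻¹ • (h1.sqrt * E xt * h1.sqrt) =
        ((E xt * σ2).trace)⁻¹ • (h2.sqrt * E xt * h2.sqrt) := by
  obtain ⟨A, hAdef⟩ : ∃ A, A = h1.sqrt := ⟨_, rfl⟩
  obtain ⟨B, hBdef⟩ : ∃ B, B = h2.sqrt := ⟨_, rfl⟩
  have hApsd : A.PosSemidef := by rw [hAdef]; exact h1.posSemidef_sqrt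
  have hBpsd : B.PosSemidef := by rw [hBdef]; exact h2.posSemidef_sqrt
  have hAA : A * A = σ1 := by rw [hAdef]; exact h1.sqrt_mul_self
  have hBB : B * B = σ2 := by rw [hBdef]; exact h2.sqrt_mul_self
  simp only [← hAdef, ← hBdef] at hAB hBw ⊢
  have hAw0 : A *ᵥ w ≠ 0 := by
    rw [hAB]
    exact smul_ne_zero (by exact_mod_cast hμ.ne') hBw
  have hσ1w : σ1 *ᵥ w ≠ 0 := by
    intro h
    apply hAw0
    have hq : star w ⬝ᵥ σ1 *ᵥ w = 0 := by rw [h, dotProduct_zero]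
    rw [← hAA, herm_sq_dot hApsd.1] at hq
    exact dotProduct_star_self_eq_zero.mp hq
  have hσ2w : σ2 *ᵥ w ≠ 0 := by
    intro h
    apply hBw
    have hq : star w ⬝ᵥ σ2 *ᵥ w = 0 := by rw [h, dotProduct_zero]
    rw [← hBB, herm_sq_dot hBpsd.1] at hq
    exact dotProduct_star_self_eq_zero.mp hq
  obtain ⟨hq1re, hq1im⟩ : 0 < (star w ⬝ᵥ σ1 *ᵥ w).re ∧ (star w ⬝ᵥ σ1 *ᵥ w).im = 0 := by
    have hne : star w ⬝ᵥ σ1 *ᵥ w ≠ 0 :=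
      fun h => hσ1w ((h1.dotProduct_mulVec_zero_iff w).mp h)
    have hle := h1.dotProduct_mulVec_nonneg w
    rw [Complex.le_def] at hle
    refine ⟨lt_of_le_of_ne (by simpa using hle.1) ?_, by simpa using hle.2.symm⟩
    intro h
    exact hne (Complex.ext (by simpa using h.symm) (by simpa using hle.2.symm))
  obtain ⟨hq2re, hq2im⟩ : 0 < (star w ⬝ᵥ σ2 *ᵥ w).re ∧ (star w ⬝ᵥ σ2 *ᵥ w).im = 0 := by
    have hne : star w ⬝ᵥ σ2 *ᵥ w ≠ 0 :=
      fun h => hσ2w ((h2.dotProduct_mulVec_zero_iff w).mp h)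
    have hle := h2.dotProduct_mulVec_nonneg w
    rw [Complex.le_def] at hle
    refine ⟨lt_of_le_of_ne (by simpa using hle.1) ?_, by simpa using hle.2.symm⟩
    intro h
    exact hne (Complex.ext (by simpa using h.symm) (by simpa using hle.2.symm))
  have hq0 : 0 ≤ (star w ⬝ᵥ w).re := by
    have h0 := dotProduct_star_self_nonneg w
    rw [Complex.le_def] at h0
    simpa using h0.1
  obtain ⟨q0, hq0def⟩ : ∃ q0 : ℝ, q0 = (star w ⬝ᵥ w).re := ⟨_, rfl⟩
  obtain ⟨q1, hq1def⟩ : ∃ q1 : ℝ, q1 = (star w ⬝ᵥ σ1 *ᵥ w).re := ⟨_, rfl⟩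
  obtain ⟨q2, hq2def⟩ : ∃ q2 : ℝ, q2 = (star w ⬝ᵥ σ2 *ᵥ w).re := ⟨_, rfl⟩
  obtain ⟨ε, hεdef⟩ : ∃ ε : ℝ, ε = (1 + q0 + q1 + q2)⁻¹ := ⟨_, rfl⟩
  have hq0' : 0 ≤ q0 := hq0def ▸ hq0
  have hq1' : 0 < q1 := hq1def ▸ hq1re
  have hq2' : 0 < q2 := hq2def ▸ hq2re
  have hden : 0 < 1 + q0 + q1 + q2 := by linarith
  have hε : 0 < ε := by rw [hεdef]; exact inv_pos.mpr hden
  have hεq0 : ε * q0 ≤ 1 := by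
    rw [hεdef]
    rw [inv_mul_le_iff₀ hden]
    nlinarith
  have hεq1 : ε * q1 < 1 := by
    rw [hεdef, inv_mul_lt_iff₀ hden]
    nlinarith
  have hεq2 : ε * q2 < 1 := by
    rw [hεdef, inv_mul_lt_iff₀ hden]
    nlinarith
  obtain ⟨W, hWdef⟩ : ∃ W, W = vecMulVec w (star w) := ⟨_, rfl⟩
  have hWpsd : W.PosSemidef := by rw [hWdef]; exact psd_outer w
  have htrW : ∀ M : Matrix (Fin n) (Fin n) ℂ, (W * M).trace = star w ⬝ᵥ M *ᵥ w := by
    intro M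
    rw [hWdef, trace_outer_mul]
  refine ⟨Fin 2, inferInstance, ⟨0⟩,
    (fun x => if x = 0 then (ε:ℂ) • W else 1 - (ε:ℂ) • W), ?_, ?_, ?_, ?_⟩
  · intro x
    dsimp only
    by_cases hx : x = 0
    · rw [if_pos hx]
      exact smul_psd ε hε.le hWpsd
    · rw [if_neg hx, hWdef]
      exact psd_one_sub_outer w ε hε.le (hq0def ▸ hεq0)
  · rw [Fin.sum_univ_two]
    norm_num
  · intro x
    dsimp only
    have key : ∀ (σ : Matrix (Fin n) (Fin n) ℂ), σ.trace = 1 →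
        ∀ q : ℝ, q = (star w ⬝ᵥ σ *ᵥ w).re → (star w ⬝ᵥ σ *ᵥ w).im = 0 →
        0 < q → ε * q < 1 →
        0 < (((if x = 0 then (ε:ℂ) • W else 1 - (ε:ℂ) • W) * σ).trace).re := by
      intro σ hσtr q hqdef hqim hqpos hεq
      by_cases hx : x = 0
      · rw [if_pos hx, Matrix.smul_mul, trace_smul, htrW]
        simp only [smul_eq_mul, Complex.mul_re, Complex.ofReal_re, Complex.ofReal_im, hqim]
        rw [← hqdef]
        nlinarith
      · rw [if_neg hx, Matrix.sub_mul, trace_sub, Matrix.one_mul, hσtr, Matrix.smul_mul,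
          trace_smul, htrW]
        simp only [Complex.sub_re, Complex.one_re, smul_eq_mul, Complex.mul_re,
          Complex.ofReal_re, Complex.ofReal_im, hqim]
        rw [← hqdef]
        nlinarith
    exact ⟨key σ1 ht1 q1 hq1def hq1im hq1' hεq1, key σ2 ht2 q2 hq2def hq2im hq2' hεq2⟩
  · refine ⟨0, ?_⟩
    dsimp only
    rw [if_pos rfl]
    have hmain : ∀ (M : Matrix (Fin n) (Fin n) ℂ), M.IsHermitian → M * M = σ1 ∨ M * M = σ2 →
        ∀ σ : Matrix (Fin n) (Fin n) ℂ, M * M = σ →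
        (((ε:ℂ) • W * σ).trace)⁻¹ • (M * ((ε:ℂ) • W) * M)
          = (star (M *ᵥ w) ⬝ᵥ (M *ᵥ w))⁻¹ • vecMulVec (M *ᵥ w) (star (M *ᵥ w)) := by
      intro M hM _ σ hMM
      have htr : ((ε:ℂ) • W * σ).trace = (ε:ℂ) * (star (M *ᵥ w) ⬝ᵥ (M *ᵥ w)) := by
        rw [Matrix.smul_mul, trace_smul, htrW, smul_eq_mul, ← hMM, herm_sq_dot hM]
      have hout : M * ((ε:ℂ) • W) * M = (ε:ℂ) • vecMulVec (M *ᵥ w) (star (M *ᵥ w)) := by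
        rw [Matrix.mul_smul, Matrix.smul_mul, hWdef, mul_outer_mul]
        congr 1
        rw [star_mulVec, hM.eq]
      rw [htr, hout, smul_smul]
      congr 1
      have hεc : (ε:ℂ) ≠ 0 := by exact_mod_cast hε.ne'
      by_cases hz : star (M *ᵥ w) ⬝ᵥ (M *ᵥ w) = 0
      · rw [hz]
        simp
      · field_simp
    rw [hmain A hApsd.1 (Or.inl hAA) σ1 hAA, hmain B hBpsd.1 (Or.inr hBB) σ2 hBB, hAB]
    exact normalized_outer_smul (B *ᵥ w) hBw (μ:ℂ) (by exact_mod_cast hμ.ne')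

lemma obj_of_subj_data {σ1 σ2 : Matrix (Fin n) (Fin n) ℂ} (hn : 1 ≤ n)
    (h1 : σ1.PosSemidef) (h2 : σ2.PosSemidef) (ht1 : σ1.trace = 1) (ht2 : σ2.trace = 1)
    (X : Type) (iX : Fintype X) (E : X → Matrix (Fin n) (Fin n) ℂ)
    (hEpsd : ∀ x, (E x).PosSemidef) (hEsum : ∑ x, E x = 1)
    (hEtr : ∀ x, 0 < ((E x * σ1).trace).re ∧ 0 < ((E x * σ2).trace).re)
    (xt : X)
    (hxt : ((E xt * σ1).trace)⁻¹ • (h1.sqrt * E xt * h1.sqrt) =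
        ((E xt * σ2).trace)⁻¹ • (h2.sqrt * E xt * h2.sqrt)) :
    ∃ (X1 : Type) (_ : Fintype X1) (X2 : Type) (_ : Fintype X2),
    Nonempty X1 ∧ Nonempty X2 ∧
    ∃ (ρ : X1 → X2 → Matrix (Fin n) (Fin n) ℂ) (x1 : X1) (x2 : X2),
      (∀ a b, (ρ a b).PosSemidef) ∧
      (∑ a, ∑ b, (ρ a b).trace = 1) ∧
      0 < ((ρ x1 x2).trace).re ∧
      σ1 = ((∑ b, ρ x1 b).trace)⁻¹ • (∑ b, ρ x1 b) ∧
      σ2 = ((∑ a, ρ a x2).trace)⁻¹ • (∑ a, ρ a x2) := by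
  classical
  obtain ⟨A, hAdef⟩ : ∃ A, A = h1.sqrt := ⟨_, rfl⟩
  obtain ⟨B, hBdef⟩ : ∃ B, B = h2.sqrt := ⟨_, rfl⟩
  have hApsd : A.PosSemidef := by rw [hAdef]; exact h1.posSemidef_sqrt
  have hBpsd : B.PosSemidef := by rw [hBdef]; exact h2.posSemidef_sqrt
  have hAA : A * A = σ1 := by rw [hAdef]; exact h1.sqrt_mul_self
  have hBB : B * B = σ2 := by rw [hBdef]; exact h2.sqrt_mul_self
  simp only [← hAdef, ← hBdef] at hxt
  obtain ⟨τ, hτdef⟩ : ∃ τ, τ = A * E xt * A := ⟨_, rfl⟩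
  obtain ⟨τ2, hτ2def⟩ : ∃ τ2, τ2 = B * E xt * B := ⟨_, rfl⟩
  have hτpsd : τ.PosSemidef := by
    rw [hτdef, show A * E xt * A = A * E xt * Aᴴ by rw [hApsd.1.eq]]
    exact (hEpsd xt).mul_mul_conjTranspose_same A
  have hτ2psd : τ2.PosSemidef := by
    rw [hτ2def, show B * E xt * B = B * E xt * Bᴴ by rw [hBpsd.1.eq]]
    exact (hEpsd xt).mul_mul_conjTranspose_same B
  have htrτ : τ.trace = (E xt * σ1).trace := by
    rw [hτdef, trace_mul_cycle, hAA, trace_mul_comm]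
  have htrτ2 : τ2.trace = (E xt * σ2).trace := by
    rw [hτ2def, trace_mul_cycle, hBB, trace_mul_comm]
  have haRe : 0 < ((E xt * σ1).trace).re := (hEtr xt).1
  have hbRe : 0 < ((E xt * σ2).trace).re := (hEtr xt).2
  have haC : (E xt * σ1).trace = ((((E xt * σ1).trace).re : ℝ) : ℂ) := by
    rw [← htrτ]; exact psd_trace_eq_re hτpsd
  have hbC : (E xt * σ2).trace = ((((E xt * σ2).trace).re : ℝ) : ℂ) := by
    rw [← htrτ2]; exact psd_trace_eq_re hτ2psd
  obtain ⟨a', ha'def⟩ : ∃ a' : ℝ, a' = ((E xt * σ1).trace).re := ⟨_, rfl⟩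
  obtain ⟨b', hb'def⟩ : ∃ b' : ℝ, b' = ((E xt * σ2).trace).re := ⟨_, rfl⟩
  have ha' : 0 < a' := ha'def ▸ haRe
  have hb' : 0 < b' := hb'def ▸ hbRe
  have haC' : (E xt * σ1).trace = (a' : ℂ) := by rw [ha'def]; exact haC
  have hbC' : (E xt * σ2).trace = (b' : ℂ) := by rw [hb'def]; exact hbC
  have ha0 : (E xt * σ1).trace ≠ 0 := by
    rw [haC']; exact_mod_cast ha'.ne'
  have hτeq : τ = (((a' / b' : ℝ)) : ℂ) • τ2 := by
    have h2 := congrArg (fun M => ((E xt * σ1).trace) • M) hxt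
    simp only [smul_smul, mul_inv_cancel₀ ha0, one_smul] at h2
    rw [hτdef, hτ2def, h2]
    congr 1
    rw [haC', hbC']
    push_cast
    ring
  -- 1 - E xt is PSD
  have hrest : (1 - E xt).PosSemidef := by
    have hsplit : ∑ x ∈ Finset.univ.erase xt, E x + E xt = 1 := by
      rw [Finset.sum_erase_add _ _ (Finset.mem_univ xt), hEsum]
    rw [show (1 : Matrix (Fin n) (Fin n) ℂ) - E xt = ∑ x ∈ Finset.univ.erase xt, E x by
      rw [← hsplit]; exact add_sub_cancel_right _ _]
    exact psd_sum _ _ hEpsd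
  have hsub1 : (σ1 - τ).PosSemidef := by
    have heq : σ1 - τ = A * (1 - E xt) * Aᴴ := by
      rw [hApsd.1.eq, Matrix.mul_sub, Matrix.sub_mul, Matrix.mul_one, hAA, hτdef]
    rw [heq]
    exact hrest.mul_mul_conjTranspose_same A
  have hsub2 : (σ2 - τ2).PosSemidef := by
    have heq : σ2 - τ2 = B * (1 - E xt) * Bᴴ := by
      rw [hBpsd.1.eq, Matrix.mul_sub, Matrix.sub_mul, Matrix.mul_one, hBB, hτ2def]
    rw [heq]
    exact hrest.mul_mul_conjTranspose_same B
  -- scalars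
  obtain ⟨sc, hscdef⟩ : ∃ sc : ℝ, sc = 1/2 * min 1 (b'/a') := ⟨_, rfl⟩
  obtain ⟨r, hrdef⟩ : ∃ r : ℝ, r = sc * (a'/b') := ⟨_, rfl⟩
  have hsc0 : 0 < sc := by
    rw [hscdef]
    have : 0 < min 1 (b'/a') := lt_min one_pos (div_pos hb' ha')
    linarith
  have hsc2 : sc ≤ 1/2 := by
    rw [hscdef]
    have : min 1 (b'/a') ≤ 1 := min_le_left _ _
    linarith
  have hr0 : 0 < r := by
    rw [hrdef]
    exact mul_pos hsc0 (div_pos ha' hb')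
  have hr2 : r ≤ 1/2 := by
    rcases le_total (b'/a') 1 with h | h
    · have h1 : (b'/a') * (a'/b') = 1 := by field_simp
      rw [hrdef, hscdef, min_eq_right h]
      nlinarith
    · have hab : a' ≤ b' := by
        rw [le_div_iff₀ ha'] at h
        linarith
      have h1 : a'/b' ≤ 1 := by rw [div_le_one hb']; exact hab
      have h2 : 0 ≤ a'/b' := le_of_lt (div_pos ha' hb')
      rw [hrdef, hscdef, min_eq_left h]
      nlinarith
  have hsτ : (sc:ℂ) • τ = (r:ℂ) • τ2 := by
    rw [hτeq, smul_smul]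
    congr 1
    rw [hrdef]
    push_cast
    ring
  have hnR : ((n:ℝ)) ≠ 0 := by
    have : (0:ℝ) < n := by exact_mod_cast Nat.lt_of_lt_of_le Nat.zero_lt_one hn
    exact this.ne'
  obtain ⟨M00, hM00⟩ : ∃ M, M = (sc:ℂ) • τ := ⟨_, rfl⟩
  obtain ⟨M01, hM01⟩ : ∃ M, M = (1/2:ℂ) • σ1 - (sc:ℂ) • τ := ⟨_, rfl⟩
  obtain ⟨M10, hM10⟩ : ∃ M, M = (1/2:ℂ) • σ2 - (sc:ℂ) • τ := ⟨_, rfl⟩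
  obtain ⟨M11, hM11⟩ : ∃ M, M = (((sc * a' / (n:ℝ)) : ℝ) : ℂ) • (1 : Matrix (Fin n) (Fin n) ℂ) :=
    ⟨_, rfl⟩
  have hM00psd : M00.PosSemidef := by rw [hM00]; exact smul_psd sc hsc0.le hτpsd
  have hM01psd : M01.PosSemidef := by
    have heq : M01 = (sc:ℂ) • (σ1 - τ) + (((1/2 - sc : ℝ)):ℂ) • σ1 := by
      rw [hM01]
      push_cast
      module
    rw [heq]
    exact (smul_psd sc hsc0.le hsub1).add (smul_psd (1/2 - sc) (by linarith) h1)
  have hM10psd : M10.PosSemidef := by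
    have heq : M10 = (r:ℂ) • (σ2 - τ2) + (((1/2 - r : ℝ)):ℂ) • σ2 := by
      rw [hM10, hsτ]
      push_cast
      module
    rw [heq]
    exact (smul_psd r hr0.le hsub2).add (smul_psd (1/2 - r) (by linarith) h2)
  have hM11psd : M11.PosSemidef := by
    rw [hM11]
    exact smul_psd _ (by positivity) Matrix.PosSemidef.one
  have htr00 : M00.trace = ((sc * a' : ℝ) : ℂ) := by
    rw [hM00, trace_smul, htrτ, haC', smul_eq_mul]
    push_cast
    ring
  have htr01 : M01.trace = (1/2 : ℂ) - ((sc * a' : ℝ) : ℂ) := by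
    rw [hM01, trace_sub, trace_smul, trace_smul, ht1, htrτ, haC', smul_eq_mul, smul_eq_mul]
    push_cast
    ring
  have htr10 : M10.trace = (1/2 : ℂ) - ((sc * a' : ℝ) : ℂ) := by
    rw [hM10, trace_sub, trace_smul, trace_smul, ht2, htrτ, haC', smul_eq_mul, smul_eq_mul]
    push_cast
    ring
  have htr11 : M11.trace = ((sc * a' : ℝ) : ℂ) := by
    rw [hM11, trace_smul, trace_one, smul_eq_mul]
    have hreal : (sc * a' / (n:ℝ)) * (n:ℝ) = sc * a' := by field_simp
    rw [show (Fintype.card (Fin n) : ℂ) = ((n:ℝ) : ℂ) by simp]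
    rw [← Complex.ofReal_mul, hreal]
  refine ⟨Fin 2, inferInstance, Fin 2, inferInstance, ⟨0⟩, ⟨0⟩,
    ![![M00, M01], ![M10, M11]], 0, 0, ?_, ?_, ?_, ?_, ?_⟩
  · intro a b
    fin_cases a <;> fin_cases b <;>
      simp only [Matrix.cons_val_zero, Matrix.cons_val_one, Matrix.head_cons] <;>
      assumption
  · simp only [Fin.sum_univ_two, Matrix.cons_val_zero, Matrix.cons_val_one, Matrix.head_cons,
      trace_add]
    rw [htr00, htr01, htr10, htr11]
    ring
  · simp only [Matrix.cons_val_zero]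
    rw [htr00]
    simpa using mul_pos hsc0 ha'
  · have hrow : (∑ b, ![![M00, M01], ![M10, M11]] (0 : Fin 2) b) = (1/2 : ℂ) • σ1 := by
      simp only [Fin.sum_univ_two, Matrix.cons_val_zero, Matrix.cons_val_one, Matrix.head_cons]
      rw [hM00, hM01]
      abel
    rw [hrow, trace_smul, ht1, smul_eq_mul, mul_one, smul_smul]
    norm_num
  · have hcol : (∑ a, ![![M00, M01], ![M10, M11]] a (0 : Fin 2)) = (1/2 : ℂ) • σ2 := by
      simp only [Fin.sum_univ_two, Matrix.cons_val_zero, Matrix.cons_val_one, Matrix.head_cons]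
      rw [hM00, hM10]
      abel
    rw [hcol, trace_smul, ht2, smul_eq_mul, mul_one, smul_smul]
    norm_num

lemma subj_of_obj_data {σ1 σ2 : Matrix (Fin n) (Fin n) ℂ}
    (h1 : σ1.PosSemidef) (h2 : σ2.PosSemidef) (ht1 : σ1.trace = 1) (ht2 : σ2.trace = 1)
    {X1 X2 : Type} [Fintype X1] [Fintype X2]
    (ρ : X1 → X2 → Matrix (Fin n) (Fin n) ℂ) (x1 : X1) (x2 : X2)
    (hρpsd : ∀ a b, (ρ a b).PosSemidef)
    (hρtr : 0 < ((ρ x1 x2).trace).re)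
    (hσ1 : σ1 = ((∑ b, ρ x1 b).trace)⁻¹ • (∑ b, ρ x1 b))
    (hσ2 : σ2 = ((∑ a, ρ a x2).trace)⁻¹ • (∑ a, ρ a x2)) :
    ∃ (X : Type) (_ : Fintype X),
    Nonempty X ∧
    ∃ E : X → Matrix (Fin n) (Fin n) ℂ,
      (∀ x, (E x).PosSemidef) ∧
      (∑ x, E x = 1) ∧
      (∀ x, 0 < ((E x * σ1).trace).re ∧ 0 < ((E x * σ2).trace).re) ∧
      ∃ xt : X,
        ((E xt * σ1).trace)⁻¹ • (h1.sqrt * E xt * h1.sqrt) =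
        ((E xt * σ2).trace)⁻¹ • (h2.sqrt * E xt * h2.sqrt) := by
  classical
  have hτpsd : (ρ x1 x2).PosSemidef := hρpsd x1 x2
  have hτ0 : ρ x1 x2 ≠ 0 := by
    intro h
    rw [h] at hρtr
    simp at hρtr
  -- row sum facts
  have key : ∀ (R : Matrix (Fin n) (Fin n) ℂ) (σ : Matrix (Fin n) (Fin n) ℂ),
      (R - ρ x1 x2).PosSemidef → σ = (R.trace)⁻¹ • R →
      ∀ x, σ *ᵥ x = 0 → (ρ x1 x2) *ᵥ x = 0 := by
    intro R σ hRsub hσ x hx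
    have htrR : 0 < R.trace.re := by
      have hsplit : R.trace = (R - ρ x1 x2).trace + (ρ x1 x2).trace := by
        rw [trace_sub]; ring
      have h0 : 0 ≤ (R - ρ x1 x2).trace.re := by
        have := psd_trace_nonneg hRsub
        rw [Complex.le_def] at this
        simpa using this.1
      rw [hsplit, Complex.add_re]
      linarith
    have htrRne : R.trace ≠ 0 := by
      intro h
      rw [h] at htrR
      simp at htrR
    have hR : R = R.trace • σ := by
      rw [hσ, smul_smul, mul_inv_cancel₀ htrRne, one_smul]
    have hRx : R *ᵥ x = 0 := by
      rw [hR, smul_mulVec, hx, smul_zero]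
    exact kernel_le hτpsd hRsub hRx
  have hRsub1 : ((∑ b, ρ x1 b) - ρ x1 x2).PosSemidef := by
    have hsplit : ∑ b ∈ Finset.univ.erase x2, ρ x1 b + ρ x1 x2 = ∑ b, ρ x1 b :=
      Finset.sum_erase_add _ _ (Finset.mem_univ x2)
    rw [show (∑ b, ρ x1 b) - ρ x1 x2 = ∑ b ∈ Finset.univ.erase x2, ρ x1 b by
      rw [← hsplit]; exact add_sub_cancel_right _ _]
    exact psd_sum _ _ fun b => hρpsd x1 b
  have hRsub2 : ((∑ a, ρ a x2) - ρ x1 x2).PosSemidef := by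
    have hsplit : ∑ a ∈ Finset.univ.erase x1, ρ a x2 + ρ x1 x2 = ∑ a, ρ a x2 :=
      Finset.sum_erase_add _ _ (Finset.mem_univ x1)
    rw [show (∑ a, ρ a x2) - ρ x1 x2 = ∑ a ∈ Finset.univ.erase x1, ρ a x2 by
      rw [← hsplit]; exact add_sub_cancel_right _ _]
    exact psd_sum _ _ fun a => hρpsd a x2
  have hkA : ∀ x, h1.sqrt *ᵥ x = 0 → (ρ x1 x2) *ᵥ x = 0 := by
    intro x hx
    have hσ1x : σ1 *ᵥ x = 0 := by
      rw [← h1.sqrt_mul_self, ← mulVec_mulVec, hx, mulVec_zero]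
    exact key _ _ hRsub1 hσ1 x hσ1x
  have hkB : ∀ x, h2.sqrt *ᵥ x = 0 → (ρ x1 x2) *ᵥ x = 0 := by
    intro x hx
    have hσ2x : σ2 *ᵥ x = 0 := by
      rw [← h2.sqrt_mul_self, ← mulVec_mulVec, hx, mulVec_zero]
    exact key _ _ hRsub2 hσ2 x hσ2x
  obtain ⟨w, μ, hμ, hAB, hBw⟩ :=
    exists_parallel h1.posSemidef_sqrt h2.posSemidef_sqrt hτpsd hτ0 hkA hkB
  exact subj_of_parallel h1 h2 ht1 ht2 w μ hμ hAB hBw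

end QCompat

/-- For density matrices on `ℂ^n` (`n ≥ 1`), objective and subjective
compatibility are equivalent. -/
theorem qObjCompatible_iff_qSubjCompatible
    {n : ℕ} (hn : 1 ≤ n) (σ1 σ2 : Matrix (Fin n) (Fin n) ℂ)
    (h1 : IsDensityMatrix σ1) (h2 : IsDensityMatrix σ2) :
    QObjCompatible σ1 σ2 ↔ QSubjCompatible h1.1 h2.1 := by
  constructor
  · intro hobj
    obtain ⟨X1, iX1, X2, iX2, hne1, hne2, ρ, x1, x2, hρpsd, hρsum, hρtr, hσ1, hσ2⟩ := hobj
    exact @QCompat.subj_of_obj_data n σ1 σ2 h1.1 h2.1 h1.2 h2.2 X1 X2 iX1 iX2 ρ x1 x2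
      hρpsd hρtr hσ1 hσ2
  · intro hsub
    obtain ⟨X, iX, hne, E, hEpsd, hEsum, hEtr, xt, hxt⟩ := hsub
    exact QCompat.obj_of_subj_data hn h1.1 h2.1 h1.2 h2.2 X iX E hEpsd hEsum hEtr xt hxt
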